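/- Under the same hypotheses (A + A^♭ + C^♭C = 0, S^♭S = SS^♭ = I, and Ξ_G(s) = S - C(sI-A)^{-1}C^♭S defined wherever sI - A is invertible), the inverse of Ξ_G(s) is given by Ξ_G(s)^{-1} = Ξ_G(-s̄)^♭ = J_m Ξ_G(-s̄)^† J_m, for every s ∈ ℂ such that both sI - A and -s̄I - A are invertible. -/
import Mathlib


open Matrix

/-- J_n = diag(I_n, -I_n). -/
noncomputable def Jmat (n : ℕ) : Matrix (Fin n ⊕ Fin n) (Fin n ⊕ Fin n) ℂ :=
  Matrix.fromBlocks 1 0 0 (-1)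

/-- The ♭ operation X^♭ = J_k X^† J_j for X ∈ ℂ^{2j×2k}. -/
noncomputable def flat {j k : ℕ} (X : Matrix (Fin j ⊕ Fin j) (Fin k ⊕ Fin k) ℂ) :
    Matrix (Fin k ⊕ Fin k) (Fin j ⊕ Fin j) ℂ :=
  Jmat k * Xᴴ * Jmat j

lemma Jmat_mul_Jmat (k : ℕ) : Jmat k * Jmat k = 1 := by
  simp [Jmat, Matrix.fromBlocks_multiply, ← Matrix.fromBlocks_one]

lemma Jmat_conjTranspose (k : ℕ) : (Jmat k)ᴴ = Jmat k := by
  simp [Jmat, Matrix.fromBlocks_conjTranspose]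

lemma flat_one {k : ℕ} : flat (1 : Matrix (Fin k ⊕ Fin k) (Fin k ⊕ Fin k) ℂ) = 1 := by
  simp [flat, Jmat_mul_Jmat]

lemma flat_mul {i j k : ℕ} (X : Matrix (Fin i ⊕ Fin i) (Fin j ⊕ Fin j) ℂ)
    (Y : Matrix (Fin j ⊕ Fin j) (Fin k ⊕ Fin k) ℂ) :
    flat (X * Y) = flat Y * flat X := by
  have h : ∀ (Z : Matrix (Fin j ⊕ Fin j) (Fin i ⊕ Fin i) ℂ),
      Jmat j * (Jmat j * Z) = Z := fun Z => by
    rw [← Matrix.mul_assoc, Jmat_mul_Jmat, Matrix.one_mul]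
  simp [flat, Matrix.conjTranspose_mul, Matrix.mul_assoc, h]

lemma flat_flat {j k : ℕ} (X : Matrix (Fin j ⊕ Fin j) (Fin k ⊕ Fin k) ℂ) :
    flat (flat X) = X := by
  have h : ∀ (Z : Matrix (Fin j ⊕ Fin j) (Fin k ⊕ Fin k) ℂ),
      Jmat j * (Jmat j * Z) = Z := fun Z => by
    rw [← Matrix.mul_assoc, Jmat_mul_Jmat, Matrix.one_mul]
  have h' : ∀ (Z : Matrix (Fin j ⊕ Fin j) (Fin k ⊕ Fin k) ℂ),
      Z * Jmat k * Jmat k = Z := fun Z => by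
    rw [Matrix.mul_assoc, Jmat_mul_Jmat, Matrix.mul_one]
  simp [flat, Matrix.conjTranspose_mul, Jmat_conjTranspose, conjTranspose_conjTranspose,
    Matrix.mul_assoc, h, Jmat_mul_Jmat]

lemma flat_sub {j k : ℕ} (X Y : Matrix (Fin j ⊕ Fin j) (Fin k ⊕ Fin k) ℂ) :
    flat (X - Y) = flat X - flat Y := by
  simp [flat, Matrix.conjTranspose_sub, Matrix.mul_sub, Matrix.sub_mul]

lemma flat_smul_one {k : ℕ} (w : ℂ) :
    flat (w • (1 : Matrix (Fin k ⊕ Fin k) (Fin k ⊕ Fin k) ℂ)) = (starRingEnd ℂ w) • 1 := by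
  simp [flat, Matrix.conjTranspose_smul, Matrix.smul_mul, Matrix.mul_smul, Jmat_mul_Jmat]

/-- For a physically realizable quantum linear system, the inverse of the transfer function
is Ξ_G(s)⁻¹ = Ξ_G(-s̄)^♭, valid whenever sI - A and -s̄I - A are invertible. -/
theorem transfer_function_inverse {n m : ℕ}
    (A : Matrix (Fin n ⊕ Fin n) (Fin n ⊕ Fin n) ℂ)
    (C : Matrix (Fin m ⊕ Fin m) (Fin n ⊕ Fin n) ℂ)
    (S : Matrix (Fin m ⊕ Fin m) (Fin m ⊕ Fin m) ℂ)
    (hPR : A + flat A + flat C * C = 0)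
    (hS : flat S * S = 1 ∧ S * flat S = 1)
    (Ξ : ℂ → Matrix (Fin m ⊕ Fin m) (Fin m ⊕ Fin m) ℂ)
    (hΞ : ∀ s : ℂ, Ξ s = S - C * (s • (1 : Matrix (Fin n ⊕ Fin n) (Fin n ⊕ Fin n) ℂ) - A)⁻¹ * (flat C * S)) :
    ∀ s : ℂ,
      IsUnit (s • (1 : Matrix (Fin n ⊕ Fin n) (Fin n ⊕ Fin n) ℂ) - A).det →
      IsUnit ((-(starRingEnd ℂ s)) • (1 : Matrix (Fin n ⊕ Fin n) (Fin n ⊕ Fin n) ℂ) - A).det →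
      Ξ s * flat (Ξ (-(starRingEnd ℂ s))) = 1 ∧ flat (Ξ (-(starRingEnd ℂ s))) * Ξ s = 1 := by
  obtain ⟨hTS, hST⟩ := hS
  intro s hMdet hNdet
  set M : Matrix (Fin n ⊕ Fin n) (Fin n ⊕ Fin n) ℂ := s • 1 - A with hMdef
  set N : Matrix (Fin n ⊕ Fin n) (Fin n ⊕ Fin n) ℂ := (-(starRingEnd ℂ s)) • 1 - A with hNdef
  set B : Matrix (Fin n ⊕ Fin n) (Fin n ⊕ Fin n) ℂ := flat C * C with hBdef
  set f := flat C with hfdef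
  set T := flat S with hTdef
  clear_value M N B f T
  set D : Matrix (Fin n ⊕ Fin n) (Fin n ⊕ Fin n) ℂ := M - B with hDdef
  clear_value D
  -- flat A from physical realizability
  have hA : flat A = -A - B := by
    calc flat A = (A + flat A + B) - A - B := by abel
      _ = -A - B := by rw [hPR]; abel
  -- flat N = -D
  have hfN : flat N = -D := by
    have h1 : flat N = (-s) • (1 : Matrix (Fin n ⊕ Fin n) (Fin n ⊕ Fin n) ℂ) - flat A := by
      rw [hNdef, flat_sub, flat_smul_one]
      simp
    rw [h1, hA, hDdef, hMdef]
    module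
  -- invertibility of D
  have hfN1 : flat N * flat N⁻¹ = 1 := by
    rw [← flat_mul, Matrix.nonsing_inv_mul _ hNdet, flat_one]
  have hD1 : D * (-(flat N⁻¹)) = 1 := by
    rw [show D = -(flat N) from by rw [hfN]; abel]
    simpa using hfN1
  have hDdet : IsUnit D.det := Matrix.isUnit_det_of_right_inverse hD1
  have hDinv : D⁻¹ = -(flat N⁻¹) := Matrix.inv_eq_right_inv hD1
  -- inverse facts
  have hMM : M⁻¹ * M = 1 := Matrix.nonsing_inv_mul _ hMdet
  have hMM' : M * M⁻¹ = 1 := Matrix.mul_nonsing_inv _ hMdet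
  have hDD : D⁻¹ * D = 1 := Matrix.nonsing_inv_mul _ hDdet
  have hDD' : D * D⁻¹ = 1 := Matrix.mul_nonsing_inv _ hDdet
  have hMDB : M = D + B := by rw [hDdef]; abel
  -- flat of Ξ(-s̄)
  have hΞw : flat (Ξ (-(starRingEnd ℂ s))) = T + T * C * D⁻¹ * f := by
    rw [hΞ, ← hNdef, flat_sub, flat_mul, flat_mul, flat_mul, ← hfdef, ← hTdef, hfdef,
      flat_flat, ← hfdef, hDinv]
    simp only [Matrix.mul_neg, Matrix.neg_mul, Matrix.mul_assoc, sub_eq_add_neg, neg_neg]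
  -- key resolvent identities
  have hkey1 : D⁻¹ = M⁻¹ + M⁻¹ * (f * (C * D⁻¹)) := by
    calc D⁻¹ = M⁻¹ * (M * D⁻¹) := by rw [← Matrix.mul_assoc, hMM, Matrix.one_mul]
      _ = M⁻¹ * ((D + B) * D⁻¹) := by rw [← hMDB]
      _ = M⁻¹ * (D * D⁻¹ + B * D⁻¹) := by rw [Matrix.add_mul]
      _ = M⁻¹ * (1 + B * D⁻¹) := by rw [hDD']
      _ = M⁻¹ + M⁻¹ * B * D⁻¹ := by rw [Matrix.mul_add, Matrix.mul_one, Matrix.mul_assoc]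
      _ = M⁻¹ + M⁻¹ * (f * (C * D⁻¹)) := by rw [hBdef, Matrix.mul_assoc, Matrix.mul_assoc]
  have hkey2 : D⁻¹ = M⁻¹ + D⁻¹ * (f * (C * M⁻¹)) := by
    calc D⁻¹ = (D⁻¹ * M) * M⁻¹ := by rw [Matrix.mul_assoc, hMM', Matrix.mul_one]
      _ = (D⁻¹ * (D + B)) * M⁻¹ := by rw [← hMDB]
      _ = (D⁻¹ * D + D⁻¹ * B) * M⁻¹ := by rw [Matrix.mul_add]
      _ = (1 + D⁻¹ * B) * M⁻¹ := by rw [hDD]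
      _ = M⁻¹ + D⁻¹ * B * M⁻¹ := by rw [Matrix.add_mul, Matrix.one_mul]
      _ = M⁻¹ + D⁻¹ * (f * (C * M⁻¹)) := by rw [hBdef, Matrix.mul_assoc, Matrix.mul_assoc]
  constructor
  · rw [hΞ, hΞw, ← hMdef]
    have hc1 : ∀ (X : Matrix (Fin m ⊕ Fin m) (Fin m ⊕ Fin m) ℂ), S * (T * X) = X :=
      fun X => by rw [← Matrix.mul_assoc, hST, Matrix.one_mul]
    simp only [Matrix.sub_mul, Matrix.mul_add, Matrix.mul_sub, Matrix.add_mul, Matrix.mul_assoc,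
      hST, hc1, Matrix.mul_one]
    have hkey1' : M⁻¹ * (f * (C * D⁻¹)) = D⁻¹ - M⁻¹ := by
      rw [eq_sub_iff_add_eq, add_comm]; exact hkey1.symm
    have hmain2 : C * (M⁻¹ * (f * (C * (D⁻¹ * f)))) = C * (D⁻¹ * f) - C * (M⁻¹ * f) := by
      calc C * (M⁻¹ * (f * (C * (D⁻¹ * f)))) = C * ((M⁻¹ * (f * (C * D⁻¹))) * f) := by
            simp [Matrix.mul_assoc]
        _ = C * ((D⁻¹ - M⁻¹) * f) := by rw [hkey1']
        _ = C * (D⁻¹ * f) - C * (M⁻¹ * f) := by simp [Matrix.sub_mul, Matrix.mul_sub]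
    rw [hmain2]
    abel
  · rw [hΞw, hΞ, ← hMdef]
    simp only [Matrix.sub_mul, Matrix.mul_add, Matrix.mul_sub, Matrix.add_mul, Matrix.mul_assoc,
      hTS]
    have hmain : C * (D⁻¹ * (f * S)) =
        C * (M⁻¹ * (f * S)) + C * (D⁻¹ * (f * (C * (M⁻¹ * (f * S))))) := by
      conv_lhs => rw [hkey2]
      simp [Matrix.add_mul, Matrix.mul_add, Matrix.mul_assoc]
    rw [hmain]
    simp only [Matrix.mul_add]
    abel
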